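/- If for each edge e = (i,j) the state ρ has witness expectation w(e) = tr((I − S_i − S_j)ρ) ≥ 0 fails on e (i.e., w(e) < 0), then ρ is not separable with respect to any bipartition (A,B) of the qubits with i ∈ A and j ∈ B; equivalently, for separable ρ = ∑_k p_k ρ_k^A ⊗ ρ_k^B with i ∈ A, j ∈ B, one has tr((S_i + S_j)ρ) ≤ 1. -/

import Mathlib

open scoped Classical
open Matrix

noncomputable section

namespace GraphStates

variable {V : Type} [Fintype V] [DecidableEq V]

/-- Matrices acting on the `|V|`-qubit Hilbert space `(ℂ²)^{⊗V}`,
indexed by computational basis states `V → Bool`. -/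
abbrev QMat (V : Type) := Matrix (V → Bool) (V → Bool) ℂ

/-- Pauli `Z` on qubit `i`. -/
def pauliZ (i : V) : QMat V :=
  Matrix.diagonal fun f => if f i then -1 else 1

/-- Pauli `X` on qubit `i`. -/
def pauliX (i : V) : QMat V :=
  Matrix.of fun f g => if f = Function.update g i (!g i) then 1 else 0

/-- Product of Pauli `Z` over a set `s` of qubits. -/
def zOn (s : Finset V) : QMat V :=
  Matrix.diagonal fun f => (-1 : ℂ) ^ (s.filter fun v => f v = true).card

/-- Controlled-`Z` gate on qubits `i`, `j`. -/
def czMat (i j : V) : QMat V :=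
  Matrix.diagonal fun f => if f i = true ∧ f j = true then -1 else 1

/-- The stabilizer generator `S_i = X_i ∏_{j ∈ N_i} Z_j` of the graph state of `G`. -/
def stab (G : SimpleGraph V) (i : V) : QMat V :=
  pauliX i * zOn (Finset.univ.filter fun j => G.Adj i j)

/-- The state `|+⟩^{⊗ V}`. -/
def plusVec : (V → Bool) → ℂ := fun _ => ((Real.sqrt 2 : ℂ))⁻¹ ^ Fintype.card V

/-- The product of the controlled-`Z` gates over all edges of `G`
(a single diagonal matrix, since `CZ` gates are diagonal and commute). -/
def czProd (G : SimpleGraph V) : QMat V :=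
  Matrix.diagonal fun f =>
    (-1 : ℂ) ^ ((Finset.univ : Finset (Sym2 V)).filter fun e =>
        e ∈ G.edgeSet ∧ ∀ v ∈ e, f v = true).card

/-- The graph state `|G⟩ = ∏_{(i,j) ∈ E} CZ^{(i,j)} |+⟩^{⊗n}` as a vector. -/
def graphStateVec (G : SimpleGraph V) : (V → Bool) → ℂ :=
  czProd G *ᵥ plusVec

/-- Outer product `|v⟩⟨v|`. -/
def outer {ι : Type} (v : ι → ℂ) : Matrix ι ι ℂ :=
  Matrix.of fun f g => v f * (starRingEnd ℂ) (v g)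

/-- Product of a family of matrices over a finite set (in a fixed enumeration order). -/
def prodOn (s : Finset V) (f : V → QMat V) : QMat V :=
  (s.toList.map f).prod

/-- The partial stabilizer projector `P(U,G) = ∏_{v ∈ U} (I + S_v)/2`. -/
def stabProj (G : SimpleGraph V) (s : Finset V) : QMat V :=
  prodOn s fun v => (2 : ℂ)⁻¹ • (1 + stab G v)

/-- Combine assignments on `s` and on its complement into a global assignment. -/
def merge (s : Finset V) (a : {v // v ∈ s} → Bool) (b : {v // v ∉ s} → Bool) : V → Bool :=
  fun v => if h : v ∈ s then a ⟨v, h⟩ else b ⟨v, h⟩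

/-- Partial trace onto the qubits in `s` (tracing out the complement). -/
def ptrace (s : Finset V) (ρ : QMat V) :
    Matrix ({v // v ∈ s} → Bool) ({v // v ∈ s} → Bool) ℂ :=
  Matrix.of fun a b => ∑ h : {v // v ∉ s} → Bool, ρ (merge s a h) (merge s b h)

/-- Embed an operator on the qubits in `s` into the full system, tensoring with
the identity on the remaining qubits: `A ↦ A ⊗ I`. -/
def embedOp (s : Finset V)
    (A : Matrix ({v // v ∈ s} → Bool) ({v // v ∈ s} → Bool) ℂ) : QMat V :=
  Matrix.of fun f g =>
    if ∀ v, v ∉ s → f v = g v then A (fun v => f v.1) (fun v => g v.1) else 0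

/-- The subgraph of `G` induced by the vertex subset `s`. -/
def inducedGraph (G : SimpleGraph V) (s : Finset V) : SimpleGraph {v // v ∈ s} :=
  G.comap Subtype.val

/-- The subgraph of `G` induced by the complement of `s`. -/
def inducedGraphC (G : SimpleGraph V) (s : Finset V) : SimpleGraph {v // v ∉ s} :=
  G.comap Subtype.val

/-- The product `U = ∏_{(i,j) ∈ Ẽ} CZ^{(i,j)}` of controlled-`Z` gates over the set `Ẽ`
of edges of `G` having exactly one endpoint in `s`. -/
def czCut (G : SimpleGraph V) (s : Finset V) : QMat V :=
  Matrix.diagonal fun f =>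
    (-1 : ℂ) ^ ((Finset.univ : Finset (Sym2 V)).filter fun e =>
        e ∈ G.edgeSet ∧ (∀ v ∈ e, f v = true) ∧ (∃ v ∈ e, v ∈ s) ∧ (∃ v ∈ e, v ∉ s)).card

/-- Tensor product of an operator on the qubits in `s` with an operator on the
complementary qubits, as an operator on the full system. -/
def tensorSplit (s : Finset V)
    (A : Matrix ({v // v ∈ s} → Bool) ({v // v ∈ s} → Bool) ℂ)
    (B : Matrix ({v // v ∉ s} → Bool) ({v // v ∉ s} → Bool) ℂ) : QMat V :=
  Matrix.of fun f g =>
    A (fun v => f v.1) (fun v => g v.1) * B (fun v => f v.1) (fun v => g v.1)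

/-- `ρ` is a pure state: the outer product of a normalized vector. -/
def IsPure {ι : Type} [Fintype ι] (ρ : Matrix ι ι ℂ) : Prop :=
  ∃ v : ι → ℂ, (∑ x, Complex.normSq (v x)) = 1 ∧ ρ = outer v

/-- `ρ` is separable with respect to the bipartition `(s, sᶜ)` of the qubits:
a probabilistic mixture of tensor products of pure states of the two subsystems. -/
def SeparableWrt (s : Finset V) (ρ : QMat V) : Prop :=
  ∃ (ι : Type) (_ : Fintype ι) (p : ι → ℝ)
    (a : ι → Matrix ({v // v ∈ s} → Bool) ({v // v ∈ s} → Bool) ℂ)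
    (b : ι → Matrix ({v // v ∉ s} → Bool) ({v // v ∉ s} → Bool) ℂ),
    (∀ k, 0 ≤ p k) ∧ (∑ k, p k) = 1 ∧
    (∀ k, IsPure (a k) ∧ IsPure (b k)) ∧
    ρ = ∑ k, (p k : ℂ) • tensorSplit s (a k) (b k)

/-- `ρ` is biseparable: a convex mixture of states, each separable with respect to
some (nontrivial) bipartition of the qubits. -/
def Biseparable (ρ : QMat V) : Prop :=
  ∃ (ι : Type) (_ : Fintype ι) (q : ι → ℝ) (A : ι → Finset V) (σ : ι → QMat V),
    (∀ k, 0 ≤ q k) ∧ (∑ k, q k) = 1 ∧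
    (∀ k, (A k).Nonempty ∧ A k ≠ Finset.univ ∧ SeparableWrt (A k) (σ k)) ∧
    ρ = ∑ k, (q k : ℂ) • σ k

/-- `𝒱` is a partition of the vertex subset `t` into nonempty pairwise disjoint blocks. -/
def IsPartitionOn (t : Finset V) (𝒱 : Finset (Finset V)) : Prop :=
  (∀ B ∈ 𝒱, B.Nonempty) ∧
  ((𝒱 : Set (Finset V)).Pairwise fun B C => Disjoint B C) ∧
  𝒱.sup id = t

/-- The entanglement witness `W(𝒱,G) = (k − 1/2) I − ∑_{B ∈ 𝒱} P(B,G)`. -/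
def witnessW (G : SimpleGraph V) (𝒱 : Finset (Finset V)) : QMat V :=
  ((𝒱.card : ℂ) - 1/2) • 1 - ∑ B ∈ 𝒱, stabProj G B

/-- The white-noise-mixed state `ρ(p) = (1−p) ρ₀ + p I / 2^n`. -/
def whiteNoise (ρ0 : QMat V) (p : ℝ) : QMat V :=
  ((1 - p : ℝ) : ℂ) • ρ0 + ((p : ℂ) / (2 ^ Fintype.card V)) • 1

/-- The element `∏_i S_i^{x_i}` of the stabilizer group of `|G⟩`. -/
def stabElem (G : SimpleGraph V) (x : V → Bool) : QMat V :=
  prodOn (Finset.univ.filter fun i => x i = true) (stab G)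

/-- The stabilizer generator of the induced subgraph `G' = G[s]`, extended by
identity to the full system: `S_i' = X_i ∏_{j ∈ N_i ∩ s} Z_j`. -/
def subStab (G : SimpleGraph V) (s : Finset V) (i : V) : QMat V :=
  pauliX i * zOn ((Finset.univ.filter fun j => G.Adj i j) ∩ s)



/-! ### Auxiliary machinery for the bipartite witness theorem -/

section Aux

/-- inner product as a dot product -/
def ip {ι : Type} [Fintype ι] (u v : ι → ℂ) : ℂ := dotProduct (star u) v

variable {ι : Type} [Fintype ι] [DecidableEq ι]

set_option linter.unusedSectionVars false

lemma ip_eq_inner (u v : ι → ℂ) :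
    ip u v = @inner ℂ (EuclideanSpace ℂ ι) _ ((WithLp.equiv 2 _).symm u) ((WithLp.equiv 2 _).symm v) := by
  rw [EuclideanSpace.inner_eq_star_dotProduct]
  simp [ip, dotProduct_comm]

lemma norm_ip_le (u v : ι → ℂ) :
    ‖ip u v‖ ≤ ‖(WithLp.equiv 2 (ι → ℂ)).symm u‖ * ‖(WithLp.equiv 2 (ι → ℂ)).symm v‖ := by
  rw [ip_eq_inner]; exact norm_inner_le_norm _ _

lemma ip_self_eq_norm_sq (u : ι → ℂ) :
    (ip u u).re = ‖(WithLp.equiv 2 (ι → ℂ)).symm u‖ ^ 2 := by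
  rw [ip_eq_inner]
  simpa using inner_self_eq_norm_sq (𝕜 := ℂ) ((WithLp.equiv 2 (ι → ℂ)).symm u)

lemma ip_mulVec_left (M : Matrix ι ι ℂ) (u v : ι → ℂ) :
    ip (Mᴴ *ᵥ u) v = ip u (M *ᵥ v) := by
  simp [ip, star_mulVec, conjTranspose_conjTranspose, dotProduct_mulVec]

lemma ip_add_right (u v w : ι → ℂ) : ip u (v + w) = ip u v + ip u w := by
  simp [ip, dotProduct_add]

lemma ip_smul_right (c : ℂ) (u v : ι → ℂ) : ip u (c • v) = c * ip u v := by
  simp [ip]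

lemma ip_smul_left (c : ℂ) (u v : ι → ℂ) : ip (c • u) v = (starRingEnd ℂ) c * ip u v := by
  simp [ip]

lemma ip_add_left (u v w : ι → ℂ) : ip (u + v) w = ip u w + ip v w := by
  simp [ip, add_dotProduct]

lemma ip_conj (u v : ι → ℂ) : (starRingEnd ℂ) (ip u v) = ip v u := by
  simp [ip, dotProduct, Finset.mul_sum, map_sum, mul_comm]

/-- expectation of a Hermitian matrix is real -/
lemma ip_herm_real (M : Matrix ι ι ℂ) (hM : Mᴴ = M) (u : ι → ℂ) :
    ((ip u (M *ᵥ u)).re : ℂ) = ip u (M *ᵥ u) := by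
  have h1 : (starRingEnd ℂ) (ip u (M *ᵥ u)) = ip u (M *ᵥ u) := by
    rw [ip_conj, ← ip_mulVec_left M u u, hM]
  exact Complex.conj_eq_iff_re.mp h1

lemma ip_self_normSq (u : ι → ℂ) :
    ip u u = ((∑ x, Complex.normSq (u x) : ℝ) : ℂ) := by
  rw [ip]
  push_cast
  apply Finset.sum_congr rfl; intro x _
  rw [Pi.star_apply, Complex.star_def, ← Complex.normSq_eq_conj_mul_self]

/-- Core: anticommuting Hermitian reflections, unit pure state. -/
lemma key_ineq (P Q : Matrix ι ι ℂ) (hP : Pᴴ = P) (hQ : Qᴴ = Q)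
    (hP2 : P * P = 1) (hQ2 : Q * Q = 1) (hPQ : P * Q + Q * P = 0)
    (u : ι → ℂ) (hu : (ip u u).re = 1) :
    (ip u (P *ᵥ u)).re ^ 2 + (ip u (Q *ᵥ u)).re ^ 2 ≤ 1 := by
  set x : ℝ := (ip u (P *ᵥ u)).re with hx
  set y : ℝ := (ip u (Q *ᵥ u)).re with hy
  have hxc : ((x : ℂ)) = ip u (P *ᵥ u) := ip_herm_real P hP u
  have hyc : ((y : ℂ)) = ip u (Q *ᵥ u) := ip_herm_real Q hQ u
  set w : ι → ℂ := (x : ℂ) • (P *ᵥ u) + (y : ℂ) • (Q *ᵥ u) with hw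
  have huw : ip u w = ((x^2 + y^2 : ℝ) : ℂ) := by
    rw [hw, ip_add_right, ip_smul_right, ip_smul_right, ← hxc, ← hyc]
    push_cast; ring
  have hPu2 : ip (P *ᵥ u) (P *ᵥ u) = ip u u := by
    rw [← hP, ip_mulVec_left, hP, Matrix.mulVec_mulVec, hP2, Matrix.one_mulVec]
  have hQu2 : ip (Q *ᵥ u) (Q *ᵥ u) = ip u u := by
    rw [← hQ, ip_mulVec_left, hQ, Matrix.mulVec_mulVec, hQ2, Matrix.one_mulVec]
  have hcross : ip (P *ᵥ u) (Q *ᵥ u) + ip (Q *ᵥ u) (P *ᵥ u) = 0 := by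
    rw [← hP, ip_mulVec_left, ← hQ, ip_mulVec_left, hP, hQ,
      Matrix.mulVec_mulVec, Matrix.mulVec_mulVec, ← ip_add_right, ← Matrix.add_mulVec]
    rw [hPQ, Matrix.zero_mulVec]
    simp [ip]
  have hww : ip w w = ((x^2 + y^2 : ℝ) : ℂ) := by
    rw [hw]
    rw [ip_add_right, ip_smul_right, ip_smul_right, ip_add_left, ip_add_left,
      ip_smul_left, ip_smul_left, ip_smul_left, ip_smul_left]
    have huu : ip u u = 1 := by
      have := ip_herm_real 1 (by simp) u
      rw [Matrix.one_mulVec] at this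
      rw [← this, hu]; norm_num
    have h4 : ip (P *ᵥ u) (Q *ᵥ u) = - ip (Q *ᵥ u) (P *ᵥ u) := by linear_combination hcross
    rw [hPu2, hQu2, huu, h4]
    simp only [Complex.conj_ofReal]
    push_cast; ring
  set s : ℝ := x^2 + y^2 with hs
  have hs0 : 0 ≤ s := by positivity
  have hnu : ‖(WithLp.equiv 2 (ι → ℂ)).symm u‖ = 1 := by
    have := ip_self_eq_norm_sq u
    rw [hu] at this
    nlinarith [norm_nonneg ((WithLp.equiv 2 (ι → ℂ)).symm u)]
  have hnw : ‖(WithLp.equiv 2 (ι → ℂ)).symm w‖ = Real.sqrt s := by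
    have := ip_self_eq_norm_sq w
    rw [hww] at this
    simp only [Complex.ofReal_re] at this
    rw [this, Real.sqrt_sq (norm_nonneg _)]
  have hcs : s ≤ Real.sqrt s := by
    calc s = (ip u w).re := by rw [huw]; simp
    _ ≤ ‖ip u w‖ := Complex.re_le_norm _
    _ ≤ ‖(WithLp.equiv 2 (ι → ℂ)).symm u‖ * ‖(WithLp.equiv 2 (ι → ℂ)).symm w‖ := norm_ip_le u w
    _ = Real.sqrt s := by rw [hnu, hnw, one_mul]
  by_contra hcon
  push_neg at hcon
  have h1 : Real.sqrt s < s := by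
    have := Real.sqrt_lt_sqrt (by norm_num) hcon
    rw [Real.sqrt_one] at this
    nlinarith [Real.sq_sqrt hs0, Real.sqrt_nonneg s]
  linarith

/-- Pauli string X_v ∏_{u ∈ S} Z_u on qubits indexed by ι. -/
def XZ (v : ι) (S : Finset ι) : Matrix (ι → Bool) (ι → Bool) ℂ :=
  Matrix.of fun f g => (if f = Function.update g v (!g v) then 1 else 0) *
    (-1 : ℂ) ^ (S.filter fun u => g u = true).card

/-- Pauli string ∏_{u ∈ S} Z_u. -/
def Zd (S : Finset ι) : Matrix (ι → Bool) (ι → Bool) ℂ :=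
  Matrix.diagonal fun f => (-1 : ℂ) ^ (S.filter fun u => f u = true).card

lemma neg_one_pow_mul_self (k : ℕ) : ((-1 : ℂ) ^ k) * ((-1 : ℂ) ^ k) = 1 := by
  rw [← pow_add, ← two_mul, pow_mul, neg_one_sq, one_pow]

lemma star_neg_one_pow (k : ℕ) : star ((-1 : ℂ) ^ k) = (-1 : ℂ) ^ k := by
  rw [star_pow]; norm_num

lemma Zd_herm (S : Finset ι) : (Zd S)ᴴ = Zd S := by
  ext f g
  simp only [Zd, Matrix.conjTranspose_apply, Matrix.diagonal_apply]
  by_cases h : f = g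
  · subst h; simp [star_pow]
  · rw [if_neg h, if_neg (fun e : g = f => h e.symm), star_zero]

lemma Zd_sq (S : Finset ι) : Zd S * Zd S = 1 := by
  ext f g
  rw [Zd, Matrix.diagonal_mul_diagonal]
  by_cases h : f = g
  · subst h
    rw [Matrix.diagonal_apply_eq, Matrix.one_apply_eq]
    exact neg_one_pow_mul_self _
  · rw [Matrix.diagonal_apply_ne _ h, Matrix.one_apply_ne h]

lemma flip_symm {v : ι} {f g : ι → Bool} (h : f = Function.update g v (!g v)) :
    g = Function.update f v (!f v) := by
  subst h
  simp [Function.update_idem]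

lemma flip_agree {v : ι} {f g : ι → Bool} (h : f = Function.update g v (!g v))
    {u : ι} (hu : u ≠ v) : f u = g u := by
  subst h
  simp [Function.update_apply, hu]

lemma filter_flip_eq {v : ι} {S : Finset ι} (hv : v ∉ S) {f g : ι → Bool}
    (h : f = Function.update g v (!g v)) :
    (S.filter fun u => f u = true) = S.filter fun u => g u = true := by
  apply Finset.filter_congr
  intro u hu
  have : u ≠ v := fun e => hv (e ▸ hu)
  rw [flip_agree h this]

lemma XZ_herm (v : ι) (S : Finset ι) (hv : v ∉ S) : (XZ v S)ᴴ = XZ v S := by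
  ext f g
  simp only [Matrix.conjTranspose_apply, XZ, Matrix.of_apply]
  rw [star_mul', star_neg_one_pow]
  by_cases h : f = Function.update g v (!g v)
  · have h' : g = Function.update f v (!f v) := flip_symm h
    rw [if_pos h, if_pos h', filter_flip_eq hv h]
    simp
  · have h' : ¬ g = Function.update f v (!f v) := fun hh => h (flip_symm hh)
    rw [if_neg h, if_neg h']
    simp

lemma update_update (v : ι) (g : ι → Bool) :
    Function.update (Function.update g v (!g v)) v
      (!(Function.update g v (!g v)) v) = g := (flip_symm rfl).symm

lemma XZ_sq (v : ι) (S : Finset ι) (hv : v ∉ S) : XZ v S * XZ v S = 1 := by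
  ext f g
  rw [Matrix.mul_apply]
  rw [Finset.sum_eq_single (Function.update g v (!g v))]
  · have h1 : XZ v S (Function.update g v (!g v)) g
        = (-1 : ℂ) ^ (S.filter fun u => g u = true).card := by
      simp [XZ]
    have h2 : XZ v S f (Function.update g v (!g v))
        = (if f = g then 1 else 0) * (-1 : ℂ) ^ (S.filter fun u => g u = true).card := by
      simp only [XZ, Matrix.of_apply]
      rw [update_update, filter_flip_eq hv (rfl : Function.update g v (!g v) = _)]
    rw [h1, h2]
    by_cases h : f = g
    · subst h
      rw [if_pos rfl, one_mul, Matrix.one_apply_eq]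
      exact neg_one_pow_mul_self _
    · rw [if_neg h, Matrix.one_apply_ne h]; ring
  · intro h _ hne
    have hz : XZ v S h g = 0 := by
      simp only [XZ, Matrix.of_apply]
      rw [if_neg hne]
      ring
    rw [hz, mul_zero]
  · intro hmem; exact absurd (Finset.mem_univ _) hmem

lemma sign_flip {v : ι} {T : Finset ι} (hv : v ∈ T) {f g : ι → Bool}
    (h : f = Function.update g v (!g v)) :
    (-1 : ℂ) ^ (T.filter fun u => f u = true).card
      = -((-1 : ℂ) ^ (T.filter fun u => g u = true).card) := by
  subst h
  by_cases hg : g v = true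
  · have hins : T.filter (fun u => g u = true)
        = insert v (T.filter fun u => Function.update g v (!g v) u = true) := by
      ext u
      by_cases huv : u = v
      · subst huv; simp [hv, hg]
      · simp [Function.update_apply, huv]
    have hnm : v ∉ T.filter (fun u => Function.update g v (!g v) u = true) := by
      simp [hg]
    rw [hins, Finset.card_insert_of_notMem hnm, pow_succ]
    ring
  · have hins : T.filter (fun u => Function.update g v (!g v) u = true)
        = insert v (T.filter fun u => g u = true) := by
      ext u
      by_cases huv : u = v
      · subst huv; simp [hv, hg]
      · simp [Function.update_apply, huv]
    have hnm : v ∉ T.filter (fun u => g u = true) := by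
      simp [hg]
    rw [hins, Finset.card_insert_of_notMem hnm, pow_succ]
    ring

lemma XZ_Zd_anticomm (v : ι) (S T : Finset ι) (hv : v ∈ T) :
    XZ v S * Zd T + Zd T * XZ v S = 0 := by
  ext f g
  rw [Matrix.add_apply, Matrix.zero_apply, Zd, Matrix.mul_diagonal, Matrix.diagonal_mul]
  by_cases h : f = Function.update g v (!g v)
  · rw [sign_flip hv h]; ring
  · have : XZ v S f g = 0 := by
      simp only [XZ, Matrix.of_apply]; rw [if_neg h]; ring
    rw [this]; ring

end Aux

section Aux2

set_option linter.unusedSectionVars false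

variable {V : Type} [Fintype V] [DecidableEq V]

lemma stab_apply (G : SimpleGraph V) (i : V) (f g : V → Bool) :
    stab G i f g = (if f = Function.update g i (!g i) then 1 else 0) *
      (-1 : ℂ) ^ ((Finset.univ.filter fun j => G.Adj i j).filter fun v => g v = true).card := by
  rw [stab, zOn, Matrix.mul_diagonal]
  rfl

/-- counting over a subtype as counting over the ambient type -/
lemma card_subtype_filter (p Q : V → Prop) [DecidablePred p] [DecidablePred Q]
    [Fintype {v // p v}] :
    (Finset.univ.filter fun u : {v // p v} => Q u.1).card
      = (Finset.univ.filter fun v => p v ∧ Q v).card := by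
  apply Finset.card_bij (fun u _ => u.1)
  · intro a ha
    simp only [Finset.mem_filter, Finset.mem_univ, true_and] at ha ⊢
    exact ⟨a.2, ha⟩
  · intro a _ b _ hab
    exact Subtype.ext hab
  · intro b hb
    simp only [Finset.mem_filter, Finset.mem_univ, true_and] at hb
    exact ⟨⟨b, hb.1⟩, by simp [hb.2], rfl⟩

/-- split of the flip condition across complementary predicates -/
lemma flip_split (pa pb : V → Prop) [DecidablePred pa] [DecidablePred pb]
    (hc : ∀ v, pb v ↔ ¬ pa v) (i : V) (hi : pa i) (f g : V → Bool) :
    f = Function.update g i (!g i) ↔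
      ((fun v : {v // pa v} => f v.1)
          = Function.update (fun v : {v // pa v} => g v.1) ⟨i, hi⟩ (!g i)
        ∧ (fun v : {v // pb v} => f v.1) = (fun v : {v // pb v} => g v.1)) := by
  constructor
  · rintro rfl
    constructor
    · funext u
      by_cases hu : u = (⟨i, hi⟩ : {v // pa v})
      · subst hu; simp
      · have : u.1 ≠ i := fun e => hu (Subtype.ext e)
        simp [Function.update_apply, this, hu]
    · funext u
      have : u.1 ≠ i := fun e => ((hc u.1).mp u.2) (e ▸ hi)
      simp [Function.update_apply, this]
  · rintro ⟨ha, hb⟩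
    funext v
    by_cases hv : pa v
    · have := congrFun ha ⟨v, hv⟩
      simp only at this
      rw [this]
      by_cases hvi : v = i
      · subst hvi
        simp [Function.update_apply]
      · have : (⟨v, hv⟩ : {u // pa u}) ≠ ⟨i, hi⟩ := fun e => hvi (congrArg Subtype.val e)
        simp [Function.update_apply, this, hvi]
    · have := congrFun hb ⟨v, (hc v).mpr hv⟩
      simp only at this
      rw [this]
      have hvi : v ≠ i := fun e => hv (e ▸ hi)
      simp [Function.update_apply, hvi]

/-- card splitting across complementary predicates -/
lemma card_split (pa pb : V → Prop) [DecidablePred pa] [DecidablePred pb]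
    (hc : ∀ v, pb v ↔ ¬ pa v) (Q : V → Prop) [DecidablePred Q] :
    (Finset.univ.filter fun v => Q v).card
      = (Finset.univ.filter fun v => pa v ∧ Q v).card
        + (Finset.univ.filter fun v => pb v ∧ Q v).card := by
  have h1 : (Finset.univ.filter fun v => pa v ∧ Q v)
      = (Finset.univ.filter Q).filter pa := by
    rw [Finset.filter_filter]
    apply Finset.filter_congr
    intro v _
    simp [and_comm]
  have h2 : (Finset.univ.filter fun v => pb v ∧ Q v)
      = (Finset.univ.filter Q).filter (fun v => ¬ pa v) := by
    rw [Finset.filter_filter]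
    apply Finset.filter_congr
    intro v _
    simp [and_comm, hc v]
  rw [h1, h2, Finset.card_filter_add_card_filter_not]

/-- Factorization of the stabilizer across a bipartition given by complementary
predicates `pa`, `pb`, where `i` lies on the `pa` side. -/
lemma stab_factor (G : SimpleGraph V) (pa pb : V → Prop)
    [DecidablePred pa] [DecidablePred pb]
    [Fintype {v // pa v}] [Fintype {v // pb v}]
    (hc : ∀ v, pb v ↔ ¬ pa v) (i : V) (hi : pa i) (f g : V → Bool) :
    stab G i f g
      = XZ (⟨i, hi⟩ : {v // pa v}) (Finset.univ.filter fun u : {v // pa v} => G.Adj i u.1)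
          (fun v => f v.1) (fun v => g v.1)
        * Zd (Finset.univ.filter fun u : {v // pb v} => G.Adj i u.1)
          (fun v : {v // pb v} => f v.1) (fun v => g v.1) := by
  rw [stab_apply]
  by_cases h : f = Function.update g i (!g i)
  · obtain ⟨ha, hb⟩ := (flip_split pa pb hc i hi f g).mp h
    rw [if_pos h]
    simp only [XZ, Zd, Matrix.of_apply]
    rw [if_pos ha]
    rw [hb, Matrix.diagonal_apply_eq]
    rw [one_mul, one_mul]
    rw [Finset.filter_filter, Finset.filter_filter, Finset.filter_filter]
    rw [card_subtype_filter pa (fun v => G.Adj i v ∧ g v = true),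
        card_subtype_filter pb (fun v => G.Adj i v ∧ g v = true),
        card_split pa pb hc (fun v => G.Adj i v ∧ g v = true), pow_add]
  · rw [if_neg h, zero_mul]
    rw [flip_split pa pb hc i hi f g] at h
    push_neg at h
    by_cases ha : (fun v : {v // pa v} => f v.1)
        = Function.update (fun v : {v // pa v} => g v.1) ⟨i, hi⟩ (!g i)
    · have hb := h ha
      simp only [XZ, Zd, Matrix.of_apply]
      rw [Matrix.diagonal_apply_ne _ hb, mul_zero]
    · simp only [XZ, Zd, Matrix.of_apply]
      rw [if_neg ha, zero_mul, zero_mul]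

/-- the splitting equivalence -/
def splitEquiv (A : Finset V) :
    (V → Bool) ≃ ({v // v ∈ A} → Bool) × ({v // v ∉ A} → Bool) where
  toFun f := (fun v => f v.1, fun v => f v.1)
  invFun p := merge A p.1 p.2
  left_inv f := by
    funext v
    by_cases h : v ∈ A <;> simp [merge, h]
  right_inv p := by
    ext v
    · simp [merge, v.2]
    · simp [merge, v.2]

lemma splitEquiv_symm_apply (A : Finset V)
    (p : ({v // v ∈ A} → Bool) × ({v // v ∉ A} → Bool)) :
    (splitEquiv A).symm p = merge A p.1 p.2 := rfl

lemma restrA_merge (A : Finset V) (a : {v // v ∈ A} → Bool) (b : {v // v ∉ A} → Bool) :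
    (fun v : {v // v ∈ A} => merge A a b v.1) = a := by
  funext v; simp [merge, v.2]

lemma restrB_merge (A : Finset V) (a : {v // v ∈ A} → Bool) (b : {v // v ∉ A} → Bool) :
    (fun v : {v // v ∉ A} => merge A a b v.1) = b := by
  funext v; simp [merge, v.2]

lemma sum_factor {k1 k2 : Type} [Fintype k1] [Fintype k2] (F : k1 → k1 → ℂ) (G : k2 → k2 → ℂ) :
    (∑ fp : k1 × k2, ∑ gp : k1 × k2, F fp.1 gp.1 * G fp.2 gp.2)
      = (∑ f1, ∑ g1, F f1 g1) * (∑ f2, ∑ g2, G f2 g2) := by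
  simp only [Fintype.sum_prod_type]
  rw [Finset.sum_mul_sum]
  apply Finset.sum_congr rfl; intro f1 _
  apply Finset.sum_congr rfl; intro f2 _
  rw [Finset.sum_mul_sum]

lemma trace_mul_expand {ι : Type} [Fintype ι] (M N : Matrix ι ι ℂ) :
    Matrix.trace (M * N) = ∑ f, ∑ g, M f g * N g f := by
  simp [Matrix.trace, Matrix.mul_apply, Matrix.diag]

/-- Trace factorization over a tensor-product operator and state. -/
lemma trace_factor (A : Finset V)
    (MA : Matrix ({v // v ∈ A} → Bool) ({v // v ∈ A} → Bool) ℂ)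
    (MB : Matrix ({v // v ∉ A} → Bool) ({v // v ∉ A} → Bool) ℂ)
    (M : QMat V)
    (hM : ∀ f g, M f g = MA (fun v => f v.1) (fun v => g v.1)
        * MB (fun v => f v.1) (fun v => g v.1))
    (a : Matrix ({v // v ∈ A} → Bool) ({v // v ∈ A} → Bool) ℂ)
    (b : Matrix ({v // v ∉ A} → Bool) ({v // v ∉ A} → Bool) ℂ) :
    Matrix.trace (M * tensorSplit A a b)
      = Matrix.trace (MA * a) * Matrix.trace (MB * b) := by
  rw [trace_mul_expand, trace_mul_expand, trace_mul_expand]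
  have reidx : ∀ (φ : (V → Bool) → (V → Bool) → ℂ),
      (∑ f, ∑ g, φ f g)
        = ∑ fp, ∑ gp, φ ((splitEquiv A).symm fp) ((splitEquiv A).symm gp) := by
    intro φ
    rw [← Equiv.sum_comp (splitEquiv A).symm (fun f => ∑ g, φ f g)]
    apply Finset.sum_congr rfl; intro fp _
    rw [← Equiv.sum_comp (splitEquiv A).symm]
  rw [reidx]
  have key : ∀ fp gp : ({v // v ∈ A} → Bool) × ({v // v ∉ A} → Bool),
      M ((splitEquiv A).symm fp) ((splitEquiv A).symm gp)
        * tensorSplit A a b ((splitEquiv A).symm gp) ((splitEquiv A).symm fp)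
      = (MA fp.1 gp.1 * a gp.1 fp.1) * (MB fp.2 gp.2 * b gp.2 fp.2) := by
    intro fp gp
    rw [splitEquiv_symm_apply, splitEquiv_symm_apply, hM]
    simp only [tensorSplit, Matrix.of_apply, restrA_merge, restrB_merge]
    ring
  calc (∑ fp : ({v // v ∈ A} → Bool) × ({v // v ∉ A} → Bool),
          ∑ gp : ({v // v ∈ A} → Bool) × ({v // v ∉ A} → Bool),
          M ((splitEquiv A).symm fp) ((splitEquiv A).symm gp)
        * tensorSplit A a b ((splitEquiv A).symm gp) ((splitEquiv A).symm fp))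
      = ∑ fp : ({v // v ∈ A} → Bool) × ({v // v ∉ A} → Bool),
          ∑ gp : ({v // v ∈ A} → Bool) × ({v // v ∉ A} → Bool),
          (MA fp.1 gp.1 * a gp.1 fp.1) * (MB fp.2 gp.2 * b gp.2 fp.2) := by
        apply Finset.sum_congr rfl; intro fp _
        apply Finset.sum_congr rfl; intro gp _
        exact key fp gp
    _ = (∑ fA, ∑ gA, MA fA gA * a gA fA) * (∑ fB, ∑ gB, MB fB gB * b gB fB) :=
        sum_factor (fun x y => MA x y * a y x) (fun x y => MB x y * b y x)

/-- expectation in a pure state as an inner product -/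
lemma trace_mul_outer {ι : Type} [Fintype ι] (M : Matrix ι ι ℂ) (v : ι → ℂ) :
    Matrix.trace (M * outer v) = ip v (M *ᵥ v) := by
  rw [trace_mul_expand]
  simp only [outer, Matrix.of_apply, ip, dotProduct, Matrix.mulVec, Pi.star_apply,
    Finset.mul_sum, Complex.star_def]
  apply Finset.sum_congr rfl; intro f _
  apply Finset.sum_congr rfl; intro g _
  ring

end Aux2

/-- if `ρ` is separable with respect to a bipartition `(A, B)` with
`i ∈ A` and `j ∈ B` for an edge `(i,j)` of `G`, then `tr((S_i + S_j) ρ) ≤ 1`;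
equivalently the witness `W_{ij} = I − S_i − S_j` has nonnegative expectation. -/
theorem separable_bipartite_witness (G : SimpleGraph V) (A : Finset V) (i j : V)
    (hij : G.Adj i j) (hi : i ∈ A) (hj : j ∉ A) (ρ : QMat V)
    (hsep : SeparableWrt A ρ) :
    (Matrix.trace ((stab G i + stab G j) * ρ)).re ≤ 1 := by
  obtain ⟨κ, hκ, p, a, b, hp0, hp1, hpure, hρ⟩ := hsep
  have hc : ∀ v : V, (v ∈ A) ↔ ¬ (v ∉ A) := fun v => ⟨fun h h2 => h2 h, not_not.mp⟩
  set PA := XZ (⟨i, hi⟩ : {v // v ∈ A})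
    (Finset.univ.filter fun u : {v // v ∈ A} => G.Adj i u.1) with hPAdef
  set QA := Zd (Finset.univ.filter fun u : {v // v ∈ A} => G.Adj j u.1) with hQAdef
  set PB := XZ (⟨j, hj⟩ : {v // v ∉ A})
    (Finset.univ.filter fun u : {v // v ∉ A} => G.Adj j u.1) with hPBdef
  set QB := Zd (Finset.univ.filter fun u : {v // v ∉ A} => G.Adj i u.1) with hQBdef
  have hfacti : ∀ f g, stab G i f g
      = PA (fun v => f v.1) (fun v => g v.1) * QB (fun v => f v.1) (fun v => g v.1) :=
    fun f g => stab_factor G (fun v => v ∈ A) (fun v => v ∉ A) (fun _ => Iff.rfl) i hi f g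
  have hfactj : ∀ f g, stab G j f g
      = QA (fun v => f v.1) (fun v => g v.1) * PB (fun v => f v.1) (fun v => g v.1) := by
    intro f g
    rw [stab_factor G (fun v => v ∉ A) (fun v => v ∈ A) hc j hj f g]
    ring
  have hiadj : (⟨i, hi⟩ : {v // v ∈ A})
      ∉ (Finset.univ.filter fun u : {v // v ∈ A} => G.Adj i u.1) := by simp
  have hjadj : (⟨j, hj⟩ : {v // v ∉ A})
      ∉ (Finset.univ.filter fun u : {v // v ∉ A} => G.Adj j u.1) := by simp
  have hiinT : (⟨i, hi⟩ : {v // v ∈ A})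
      ∈ (Finset.univ.filter fun u : {v // v ∈ A} => G.Adj j u.1) := by simp [hij.symm]
  have hjinT : (⟨j, hj⟩ : {v // v ∉ A})
      ∈ (Finset.univ.filter fun u : {v // v ∉ A} => G.Adj i u.1) := by simp [hij]
  have hk : ∀ k, ∃ r : ℝ, r ≤ 1 ∧
      Matrix.trace ((stab G i + stab G j) * tensorSplit A (a k) (b k)) = (r : ℂ) := by
    intro k
    obtain ⟨⟨u, hu1, hau⟩, ⟨w, hw1, hbw⟩⟩ := hpure k
    have huu : (ip u u).re = 1 := by rw [ip_self_normSq, hu1]; simp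
    have hww : (ip w w).re = 1 := by rw [ip_self_normSq, hw1]; simp
    have e1 : Matrix.trace (stab G i * tensorSplit A (a k) (b k))
        = ip u (PA *ᵥ u) * ip w (QB *ᵥ w) := by
      rw [trace_factor A PA QB (stab G i) hfacti (a k) (b k), hau, hbw,
        trace_mul_outer, trace_mul_outer]
    have e2 : Matrix.trace (stab G j * tensorSplit A (a k) (b k))
        = ip u (QA *ᵥ u) * ip w (PB *ᵥ w) := by
      rw [trace_factor A QA PB (stab G j) hfactj (a k) (b k), hau, hbw,
        trace_mul_outer, trace_mul_outer]
    have hPAh : PAᴴ = PA := XZ_herm _ _ hiadj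
    have hQAh : QAᴴ = QA := Zd_herm _
    have hPBh : PBᴴ = PB := XZ_herm _ _ hjadj
    have hQBh : QBᴴ = QB := Zd_herm _
    set xA := (ip u (PA *ᵥ u)).re with hxA
    set qA := (ip u (QA *ᵥ u)).re with hqA
    set xB := (ip w (PB *ᵥ w)).re with hxB
    set qB := (ip w (QB *ᵥ w)).re with hqB
    have hxAc : ((xA : ℂ)) = ip u (PA *ᵥ u) := ip_herm_real PA hPAh u
    have hqAc : ((qA : ℂ)) = ip u (QA *ᵥ u) := ip_herm_real QA hQAh u
    have hxBc : ((xB : ℂ)) = ip w (PB *ᵥ w) := ip_herm_real PB hPBh w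
    have hqBc : ((qB : ℂ)) = ip w (QB *ᵥ w) := ip_herm_real QB hQBh w
    have key1 : xA ^ 2 + qA ^ 2 ≤ 1 :=
      key_ineq PA QA hPAh hQAh (XZ_sq _ _ hiadj) (Zd_sq _)
        (XZ_Zd_anticomm _ _ _ hiinT) u huu
    have key2 : xB ^ 2 + qB ^ 2 ≤ 1 :=
      key_ineq PB QB hPBh hQBh (XZ_sq _ _ hjadj) (Zd_sq _)
        (XZ_Zd_anticomm _ _ _ hjinT) w hww
    refine ⟨xA * qB + qA * xB, ?_, ?_⟩
    · nlinarith [sq_nonneg (xA - qB), sq_nonneg (qA - xB)]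
    · rw [Matrix.add_mul, Matrix.trace_add, e1, e2, ← hxAc, ← hqAc, ← hxBc, ← hqBc]
      push_cast
      ring
  choose r hr1 hr2 using hk
  have htot : Matrix.trace ((stab G i + stab G j) * ρ) = ∑ k, (p k : ℂ) * (r k : ℂ) := by
    rw [hρ, Matrix.mul_sum, Matrix.trace_sum]
    apply Finset.sum_congr rfl; intro k _
    rw [Matrix.mul_smul, Matrix.trace_smul, hr2 k]
    simp [smul_eq_mul]
  rw [htot]
  have : (∑ k, (p k : ℂ) * (r k : ℂ)) = ((∑ k, p k * r k : ℝ) : ℂ) := by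
    push_cast; ring
  rw [this, Complex.ofReal_re]
  calc (∑ k, p k * r k) ≤ ∑ k, p k * 1 := by
        apply Finset.sum_le_sum
        intro k _
        exact mul_le_mul_of_nonneg_left (hr1 k) (hp0 k)
    _ = 1 := by simpa using hp1

end GraphStates
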